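/- arXiv:math/0607218 — 2 statements merged into one kernel-verified Lean document; each statement's English description precedes it below -/
import Mathlib

section
/- If H ⊆ Q*_λ is linked, then (a) for any p₀, …, p_n ∈ H (n < ω) there is q ∈ Q*_λ which is ≤*-above each of p₀, …, p_n, and (b) fil(H) has the finite intersection property. -/
namespace RS889

noncomputable section

open Cardinal Set

universe u v

/-- `F` is a (proper) filter on the set `Z`, presented as the family of its members. -/
def IsFilterOn {α : Type u} (F : Set (Set α)) (Z : Set α) : Prop :=
  (∀ A ∈ F, A ⊆ Z) ∧ Z ∈ F ∧
    (∀ A ∈ F, ∀ B, A ⊆ B → B ⊆ Z → B ∈ F) ∧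
    (∀ A ∈ F, ∀ B ∈ F, A ∩ B ∈ F) ∧ ∅ ∉ F

/-- The family `F⁺` of `F`-positive subsets of `Z`. -/
def posOf {α : Type u} (F : Set (Set α)) (Z : Set α) : Set (Set α) :=
  {B | B ⊆ Z ∧ ∀ C ∈ F, (B ∩ C).Nonempty}

/-- `F` is an ultrafilter on the set `Z`. -/
def IsUltraOn {α : Type u} (F : Set (Set α)) (Z : Set α) : Prop :=
  IsFilterOn F Z ∧ ∀ A ⊆ Z, A ∈ F ∨ Z \ A ∈ F

/-- An unultra filter: every positive set splits into two positive pieces. -/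
def Unultra {α : Type u} (F : Set (Set α)) (Z : Set α) : Prop :=
  ∀ A ∈ posOf F Z, ∃ B ⊆ A, B ∈ posOf F Z ∧ A \ B ∈ posOf F Z

/-- The sum `⊕^E_{x ∈ X} Fx x` of the filters `Fx x` on the sets `Z x` over a filter `E` on `X`. -/
def filSum {α : Type u} {β : Type v} (X : Set α) (E : Set (Set α))
    (Z : α → Set β) (Fx : α → Set (Set β)) : Set (Set β) :=
  {A | A ⊆ (⋃ x ∈ X, Z x) ∧ {x | x ∈ X ∧ Z x ∩ A ∈ Fx x} ∈ E}

/-- The sum `⊕_{ζ<ξ} F ζ` over the filter of co-bounded subsets of `ξ`. -/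
def cobddSum {α : Type u} (ξ : Ordinal.{0}) (Z : Ordinal.{0} → Set α)
    (F : Ordinal.{0} → Set (Set α)) : Set (Set α) :=
  {A | A ⊆ (⋃ ζ ∈ Set.Iio ξ, Z ζ) ∧ ∃ β < ξ, ∀ ζ, β ≤ ζ → ζ < ξ → Z ζ ∩ A ∈ F ζ}

/-- A triple `(α, Z, F)`: an ordinal, a set of ordinals and a family of subsets of `Z`
(intended to be a filter on `Z`). -/
structure LocalFilter : Type 1 where
  a : Ordinal.{0}
  Z : Set Ordinal.{0}
  F : Set (Set Ordinal.{0})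

/-- A system of local filters on `lam`. -/
def IsLFS (lam : Cardinal.{0}) (S : Set LocalFilter) : Prop :=
  (∀ t ∈ S, t.Z ⊆ Set.Iio lam.ord ∧ #t.Z < Cardinal.lift.{1} lam ∧
      IsLeast t.Z t.a ∧ IsFilterOn t.F t.Z) ∧
    ∀ β < lam.ord, ∃ t ∈ S, β ≤ t.a

/-- The family `Q*_lam(S)`. -/
def Qstar (lam : Cardinal.{0}) (S : Set LocalFilter) : Set (Set LocalFilter) :=
  {r | r ⊆ S ∧ #r = Cardinal.lift.{1} lam ∧
    ∀ ξ : Ordinal.{0}, #{t | t ∈ r ∧ t.a = ξ} < Cardinal.lift.{1} lam}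

/-- The filter `fil(r)` on `lam` generated by `r`. -/
def fil (lam : Cardinal.{0}) (r : Set LocalFilter) : Set (Set Ordinal.{0}) :=
  {A | A ⊆ Set.Iio lam.ord ∧ ∃ ε < lam.ord, ∀ t ∈ r, ε ≤ t.a → A ∩ t.Z ∈ t.F}

/-- `r` is strongly disjoint. -/
def StronglyDisjoint (r : Set LocalFilter) : Prop :=
  (∀ s ∈ r, ∀ t ∈ r, s.a = t.a → s = t) ∧
    ∀ s ∈ r, ∀ t ∈ r, s.a < t.a → s.Z ⊆ Set.Iio t.a

/-- The family `Q⁰_lam(S)` of strongly disjoint members of `Q*_lam(S)`. -/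
def Qzero (lam : Cardinal.{0}) (S : Set LocalFilter) : Set (Set LocalFilter) :=
  {r | r ∈ Qstar lam S ∧ StronglyDisjoint r}

/-- `fil(H) = ⋃ { fil(r) : r ∈ H }`. -/
def filH (lam : Cardinal.{0}) (H : Set (Set LocalFilter)) : Set (Set Ordinal.{0}) :=
  {A | ∃ r ∈ H, A ∈ fil lam r}

/-- A uniform family of subsets of `lam`: every member has cardinality `lam`. -/
def IsUniform (lam : Cardinal.{0}) (D : Set (Set Ordinal.{0})) : Prop :=
  ∀ A ∈ D, #A = Cardinal.lift.{1} lam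

/-- `C` is a club (closed unbounded) subset of `lam`. -/
def IsClub (lam : Cardinal.{0}) (C : Set Ordinal.{0}) : Prop :=
  C ⊆ Set.Iio lam.ord ∧ (∀ β < lam.ord, ∃ γ ∈ C, β < γ) ∧
    ∀ δ, δ < lam.ord → δ ≠ 0 → (∀ β < δ, ∃ γ ∈ C, β < γ ∧ γ < δ) → δ ∈ C

/-- `St` is stationary in `lam`. -/
def IsStationary (lam : Cardinal.{0}) (St : Set Ordinal.{0}) : Prop :=
  ∀ C, IsClub lam C → (St ∩ C).Nonempty

/-- `D` is a weakly reasonable (ultra)filter on `lam`. -/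
def WeaklyReasonable (lam : Cardinal.{0}) (D : Set (Set Ordinal.{0})) : Prop :=
  ∀ f : Ordinal.{0} → Ordinal.{0},
    (∀ δ < lam.ord, f δ < lam.ord) →
    (∀ δ δ', δ ≤ δ' → δ' < lam.ord → f δ ≤ f δ') →
    (∀ β < lam.ord, ∃ δ < lam.ord, β ≤ f δ) →
    ∃ C, IsClub lam C ∧ (⋃ δ ∈ C, Set.Ico δ (δ + f δ)) ∉ D

/-- `e` is the increasing enumeration of `C ∪ {0}` (in order type `lam`). -/
def IsEnum (lam : Cardinal.{0}) (C : Set Ordinal.{0}) (e : Ordinal.{0} → Ordinal.{0}) : Prop :=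
  (∀ ξ η, ξ < η → η < lam.ord → e ξ < e η) ∧
    (∀ ξ < lam.ord, e ξ ∈ insert 0 C) ∧
    ∀ γ ∈ insert 0 C, ∃ ξ < lam.ord, e ξ = γ

/-- The quotient `D/C`, where `e` is the increasing enumeration of `C ∪ {0}`. -/
def quotFil (lam : Cardinal.{0}) (D : Set (Set Ordinal.{0})) (e : Ordinal.{0} → Ordinal.{0}) :
    Set (Set Ordinal.{0}) :=
  {A | A ⊆ Set.Iio lam.ord ∧ (⋃ ξ ∈ A, Set.Ico (e ξ) (e (ξ + 1))) ∈ D}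

/-- `d` is an increasing continuous sequence of ordinals below `lam` (indexed by `ξ < lam`). -/
def IncrCont (lam : Cardinal.{0}) (d : Ordinal.{0} → Ordinal.{0}) : Prop :=
  (∀ ξ < lam.ord, d ξ < lam.ord) ∧
    (∀ ξ η, ξ < η → η < lam.ord → d ξ < d η) ∧
    ∀ δ, δ < lam.ord → Order.IsSuccLimit δ → ∀ β < d δ, ∃ ξ < δ, β ≤ d ξ

/-- The full system `𝓕^ult` of local non-principal ultrafilters on `lam`. -/
def Fult (lam : Cardinal.{0}) : Set LocalFilter :=
  {t | t.a < lam.ord ∧ t.a ∈ t.Z ∧ t.Z ⊆ {o | t.a ≤ o ∧ o < lam.ord} ∧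
      t.Z.Infinite ∧ #t.Z < Cardinal.lift.{1} lam ∧ IsUltraOn t.F t.Z ∧
      ∀ x : Ordinal.{0}, ({x} : Set Ordinal.{0}) ∉ t.F}

/-- `Σ(p)`. -/
def SigmaP (lam : Cardinal.{0}) (p : Set LocalFilter) : Set LocalFilter :=
  {t | t ∈ Fult lam ∧ ∀ A ∈ t.F, ∃ s ∈ p, A ∩ s.Z ∈ s.F}

/-- A linked family `H ⊆ Q*_lam`. -/
def Linked (lam : Cardinal.{0}) (H : Set (Set LocalFilter)) : Prop :=
  H.Nonempty ∧ ∀ S : Set (Set LocalFilter), S ⊆ H → S.Finite → S.Nonempty →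
    #{α : Ordinal.{0} | ∃ t : LocalFilter, t.a = α ∧ ∀ p ∈ S, t ∈ SigmaP lam p} =
      Cardinal.lift.{1} lam

/-- A big family `H ⊆ Q*_lam`. -/
def Big (lam : Cardinal.{0}) (H : Set (Set LocalFilter)) : Prop :=
  H.Nonempty ∧ ∀ D ⊆ Fult lam, ∃ q ∈ H, q ⊆ D ∨ q ∩ D = ∅

/-- The condition `(⊕)^sum_S`. -/
def SumCond (lam : Cardinal.{0}) (S : Set LocalFilter) : Prop :=
  ∀ κ : Cardinal.{0}, ℵ₀ ≤ κ → κ < lam →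
    ∀ t : Ordinal.{0} → LocalFilter,
      (∀ ξ < κ.ord, t ξ ∈ S) →
      (∀ ξ ζ, ξ < ζ → ζ < κ.ord → (t ξ).Z ⊆ Set.Iio (t ζ).a) →
      ∃ E : Set (Set Ordinal.{0}), IsFilterOn E (Set.Iio κ.ord) ∧
        (∀ A ∈ E, #A = Cardinal.lift.{1} κ) ∧
        (LocalFilter.mk (t 0).a (⋃ ξ ∈ Set.Iio κ.ord, (t ξ).Z)
          (filSum (Set.Iio κ.ord) E (fun ξ => (t ξ).Z) (fun ξ => (t ξ).F))) ∈ S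

/-- `(<lam⁺)`-completeness of a subfamily `Q` of `Q*` with respect to `≤*`. -/
def Complete (lam : Cardinal.{0}) (Q : Set (Set LocalFilter)) : Prop :=
  ∀ γ : Ordinal.{0}, γ.card ≤ lam →
    ∀ p : Ordinal.{0} → Set LocalFilter,
      (∀ ξ < γ, p ξ ∈ Q) →
      (∀ ξ ζ, ξ ≤ ζ → ζ < γ → fil lam (p ξ) ⊆ fil lam (p ζ)) →
      ∃ q ∈ Q, ∀ ξ < γ, fil lam (p ξ) ⊆ fil lam q

/-- The full system `𝓕₀` of co-bounded filters on `lam`. -/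
def Fcobdd (lam : Cardinal.{0}) : Set LocalFilter :=
  {t | t.a ∈ t.Z ∧ t.Z ⊆ {o | t.a ≤ o ∧ o < lam.ord} ∧
      #t.Z < Cardinal.lift.{1} lam ∧ sSup t.Z ∉ t.Z ∧
      t.F = {A | A ⊆ t.Z ∧ ∃ β < sSup t.Z, ∀ x ∈ t.Z, β ≤ x → x ∈ A}}

/-- The `Ē`-closure of a system `S` of local filters (as an inductive family:
it is closed under `E κ`-sums of `κ`-sequences of previously obtained triples). -/
inductive EClos (lam : Cardinal.{0}) (E : Cardinal.{0} → Set (Set Ordinal.{0}))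
    (S : Set LocalFilter) : LocalFilter → Prop
  | base : ∀ t ∈ S, EClos lam E S t
  | sum : ∀ κ : Cardinal.{0}, ℵ₀ ≤ κ → κ < lam →
      ∀ t : Ordinal.{0} → LocalFilter,
        (∀ ξ < κ.ord, EClos lam E S (t ξ)) →
        (∀ ξ ζ, ξ < ζ → ζ < κ.ord → (t ξ).Z ⊆ Set.Iio (t ζ).a) →
        EClos lam E S (LocalFilter.mk (t 0).a (⋃ ξ ∈ Set.Iio κ.ord, (t ξ).Z)
          (filSum (Set.Iio κ.ord) (E κ) (fun ξ => (t ξ).Z) (fun ξ => (t ξ).F)))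

/-- The full system `𝓕^unu` of local unultra filters on `lam`. -/
def Funu (lam : Cardinal.{0}) : Set LocalFilter :=
  {t | t.Z.Nonempty ∧ t.Z ⊆ Set.Iio lam.ord ∧ #t.Z < Cardinal.lift.{1} lam ∧
      IsLeast t.Z t.a ∧ IsFilterOn t.F t.Z ∧ Unultra t.F t.Z}

/-- A pararegularity system for `F` (on `Z`), indexed by finite subsets of `κ`. -/
def PRSystem (κ : Cardinal.{0}) (F : Set (Set Ordinal.{0})) (Z : Set Ordinal.{0}) : Prop :=
  ∃ A : Finset Ordinal.{0} → Set Ordinal.{0},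
    (∀ u : Finset Ordinal.{0}, ↑u ⊆ Set.Iio κ.ord → A u ∈ F) ∧
    (∀ u v : Finset Ordinal.{0}, ↑v ⊆ Set.Iio κ.ord → u ⊆ v → A v ⊆ A u) ∧
    (∀ U : Set Ordinal.{0}, U ⊆ Set.Iio κ.ord → U.Infinite →
      (⋂ ξ ∈ U, A {ξ}) = ∅) ∧
    F = {B | B ⊆ Z ∧ ∃ u : Finset Ordinal.{0}, ↑u ⊆ Set.Iio κ.ord ∧ A u ⊆ B}

/-- `F` is a pararegular filter on `Z` (with `α = min Z`). -/
def Pararegular (lam : Cardinal.{0}) (F : Set (Set Ordinal.{0})) (Z : Set Ordinal.{0})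
    (α : Ordinal.{0}) : Prop :=
  ∃ κ : Cardinal.{0}, (Ordinal.omega0 + α).card ≤ κ ∧ κ < lam ∧ PRSystem κ F Z

/-- `F` is a strongly pararegular filter on `Z` (with `α = min Z`). -/
def StronglyPararegular (lam : Cardinal.{0}) (F : Set (Set Ordinal.{0})) (Z : Set Ordinal.{0})
    (α : Ordinal.{0}) : Prop :=
  ∃ κ : Cardinal.{0}, 2 ^ (Ordinal.omega0 + α).card ≤ κ ∧ κ < lam ∧ PRSystem κ F Z

/-- The full system `𝓕^pr` of local pararegular filters on `lam`. -/
def Fpr (lam : Cardinal.{0}) : Set LocalFilter :=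
  {t | t.Z.Infinite ∧ t.Z ⊆ Set.Iio lam.ord ∧ #t.Z < Cardinal.lift.{1} lam ∧
      IsLeast t.Z t.a ∧ IsFilterOn t.F t.Z ∧ Pararegular lam t.F t.Z t.a}

/-- The full system `𝓕^spr` of local strongly pararegular filters on `lam`. -/
def Fspr (lam : Cardinal.{0}) : Set LocalFilter :=
  {t | t.Z.Infinite ∧ t.Z ⊆ Set.Iio lam.ord ∧ #t.Z < Cardinal.lift.{1} lam ∧
      IsLeast t.Z t.a ∧ IsFilterOn t.F t.Z ∧ StronglyPararegular lam t.F t.Z t.a}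

/-- The space `^lam lam`. -/
def Fn (lam : Cardinal.{0}) : Type 1 := ↥(Set.Iio lam.ord) → ↥(Set.Iio lam.ord)

/-- The basic open set `O_s` determined by a partial function `s` of length `γ`. -/
def basicOpen (lam : Cardinal.{0}) (γ : Ordinal.{0}) (s : Ordinal.{0} → Ordinal.{0}) : Set (Fn lam) :=
  {f | ∀ ξ : ↥(Set.Iio lam.ord), (ξ : Ordinal.{0}) < γ → ((f ξ : Ordinal.{0}) = s ξ)}

/-- `X ⊆ ^lam lam` is nowhere dense. -/
def NwDense (lam : Cardinal.{0}) (X : Set (Fn lam)) : Prop :=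
  ∀ γ < lam.ord, ∀ s : Ordinal.{0} → Ordinal.{0}, (∀ ξ < γ, s ξ < lam.ord) →
    ∃ γ', γ ≤ γ' ∧ γ' < lam.ord ∧ ∃ s' : Ordinal.{0} → Ordinal.{0},
      (∀ ξ < γ', s' ξ < lam.ord) ∧ (∀ ξ < γ, s' ξ = s ξ) ∧
      basicOpen lam γ' s' ∩ X = ∅

/-- `X` belongs to the ideal `M^lam_{lam,lam}`: it is covered by `lam` many
nowhere dense sets. -/
def MeagerSet (lam : Cardinal.{0}) (X : Set (Fn lam)) : Prop :=
  ∃ A : Ordinal.{0} → Set (Fn lam), (∀ ξ < lam.ord, NwDense lam (A ξ)) ∧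
    X ⊆ ⋃ ξ ∈ Set.Iio lam.ord, A ξ

/-- `cov(M^lam_{lam,lam})`. -/
def covM (lam : Cardinal.{0}) : Cardinal.{1} :=
  sInf {c | ∃ 𝓐 : Set (Set (Fn lam)), (∀ X ∈ 𝓐, MeagerSet lam X) ∧
    ⋃₀ 𝓐 = Set.univ ∧ #𝓐 = c}

/-- Nodes of trees of sequences of ordinals: a pair (level, function). -/
abbrev TNode : Type 1 := Ordinal.{0} × (Ordinal.{0} → Ordinal.{0})

/-- Truncation of a function below `γ` (with value `0` elsewhere). -/
def truncF (γ : Ordinal.{0}) (f : Ordinal.{0} → Ordinal.{0}) : Ordinal.{0} → Ordinal.{0} :=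
  fun ξ => if ξ < γ then f ξ else 0

/-- `T` is a tree of height `lam` of (normalized) sequences of ordinals `< lam`. -/
def IsTree (lam : Cardinal.{0}) (T : Set TNode) : Prop :=
  (∀ x ∈ T, x.1 < lam.ord ∧ (∀ ξ < x.1, x.2 ξ < lam.ord) ∧ x.2 = truncF x.1 x.2) ∧
    ∀ x ∈ T, ∀ γ ≤ x.1, (γ, truncF γ x.2) ∈ T

/-- The `γ`-th level of `T`. -/
def treeLevel (T : Set TNode) (γ : Ordinal.{0}) : Set TNode := {x | x ∈ T ∧ x.1 = γ}

/-- `T` is a `lam`-Kurepa tree: a tree of height `lam` all of whose levels are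
nonempty of cardinality `< lam`. -/
def IsKurepaTree (lam : Cardinal.{0}) (T : Set TNode) : Prop :=
  IsTree lam T ∧
    ∀ γ < lam.ord, (treeLevel T γ).Nonempty ∧
      #(treeLevel T γ) < Cardinal.lift.{1} lam

/-- The set of `lam`-branches of `T` (normalized functions all of whose proper
initial segments lie in `T`). -/
def branches (lam : Cardinal.{0}) (T : Set TNode) : Set (Ordinal.{0} → Ordinal.{0}) :=
  {f | f = truncF lam.ord f ∧ ∀ γ < lam.ord, (γ, truncF γ f) ∈ T}


/-! ### Auxiliary lemmas for `stmt15` -/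

private lemma lift_isRegular {lam : Cardinal.{0}} (h : lam.IsRegular) :
    (Cardinal.lift.{1} lam).IsRegular := by
  constructor
  · simpa using Cardinal.lift_le.{1}.mpr h.1
  · rw [← Cardinal.lift_ord, ← Ordinal.lift_cof]
    exact Cardinal.lift_le.mpr h.2

private lemma bdd {lam : Cardinal.{0}} (hreg : lam.IsRegular)
    {X : Set Ordinal.{0}} (hX : ∀ x ∈ X, x < lam.ord)
    (hcard : #X < Cardinal.lift.{1} lam) :
    ∃ b, b < lam.ord ∧ ∀ x ∈ X, x < b := by
  obtain ⟨c, hclt, hc⟩ := Cardinal.lt_lift_iff.mp hcard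
  have hmk : Cardinal.lift.{1} #c.out = Cardinal.lift.{0} #(↥X) := by
    rw [Cardinal.mk_out]; simpa using hc
  obtain ⟨e⟩ := Cardinal.lift_mk_eq'.mp hmk
  set f : c.out → Ordinal.{0} := fun i => ((e i : ↥X) : Ordinal.{0}) with hf
  have hsup : Ordinal.lsub f < lam.ord := by
    apply Ordinal.lsub_lt_ord
    · rw [Cardinal.mk_out, hreg.cof_eq]; exact hclt
    · exact fun i => hX _ (e i).2
  refine ⟨Ordinal.lsub f, hsup, fun x hx => ?_⟩
  have : f (e.symm ⟨x, hx⟩) = x := by simp [hf]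
  rw [← this]
  exact Ordinal.lt_lsub f _

private lemma small_below {lam : Cardinal.{0}} (hreg : lam.IsRegular)
    {S : Set LocalFilter} {p : Set LocalFilter} (hp : p ∈ Qstar lam S)
    {ε : Ordinal.{0}} (hε : ε < lam.ord) :
    #{s : LocalFilter | s ∈ p ∧ s.a < ε} < Cardinal.lift.{1} lam := by
  have hsub : {s : LocalFilter | s ∈ p ∧ s.a < ε} ⊆
      ⋃ ξ : ↥(Set.Iio ε), {t : LocalFilter | t ∈ p ∧ t.a = (ξ : Ordinal.{0})} := by
    rintro s ⟨hsp, hsa⟩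
    exact Set.mem_iUnion.mpr ⟨⟨s.a, hsa⟩, ⟨hsp, rfl⟩⟩
  calc #{s : LocalFilter | s ∈ p ∧ s.a < ε}
      ≤ #(⋃ ξ : ↥(Set.Iio ε), {t : LocalFilter | t ∈ p ∧ t.a = (ξ : Ordinal.{0})}) :=
        Cardinal.mk_le_mk_of_subset hsub
    _ ≤ Cardinal.sum (fun ξ : ↥(Set.Iio ε) =>
          #{t : LocalFilter | t ∈ p ∧ t.a = (ξ : Ordinal.{0})}) :=
        Cardinal.mk_iUnion_le_sum_mk
    _ < Cardinal.lift.{1} lam := by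
        apply Cardinal.sum_lt_of_isRegular (lift_isRegular hreg)
        · rw [Ordinal.mk_Iio_ordinal]
          exact Cardinal.lift_lt.mpr (Cardinal.lt_ord.mp hε)
        · exact fun ξ => hp.2.2 _

private lemma exists_high {lam : Cardinal.{0}} (hreg : lam.IsRegular)
    {S : Set LocalFilter} {q : Set LocalFilter} (hq : q ∈ Qstar lam S)
    {ε : Ordinal.{0}} (hε : ε < lam.ord) :
    ∃ t ∈ q, ε ≤ t.a := by
  by_contra hcon
  push_neg at hcon
  have hsub : q ⊆ {s : LocalFilter | s ∈ q ∧ s.a < ε} := fun s hs => ⟨hs, hcon s hs⟩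
  have h2 := (Cardinal.mk_le_mk_of_subset hsub).trans_lt (small_below hreg hq hε)
  rw [hq.2.1] at h2
  exact lt_irrefl _ h2

private lemma sigma_fil {lam : Cardinal.{0}} (hreg : lam.IsRegular)
    {p : Set LocalFilter} (hp : p ∈ Qstar lam (Fult lam))
    {A : Set Ordinal.{0}} (hA : A ∈ fil lam p) :
    ∃ ε' < lam.ord, ∀ t ∈ SigmaP lam p, ε' ≤ t.a → A ∩ t.Z ∈ t.F := by
  obtain ⟨hAsub, ε, hε, hwit⟩ := hA
  set P : Set LocalFilter := {s : LocalFilter | s ∈ p ∧ s.a < ε} with hP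
  have hPcard : #P < Cardinal.lift.{1} lam := small_below hreg hp hε
  have hbd : ∀ s : ↥P, ∃ b, b < lam.ord ∧ ∀ x ∈ (s : LocalFilter).Z, x < b := by
    rintro ⟨s, hsp, -⟩
    have hsF := hp.1 hsp
    exact bdd hreg (fun x hx => ((hsF.2.2.1 hx).2)) hsF.2.2.2.2.1
  choose b hb1 hb2 using hbd
  obtain ⟨ε', hε', hYb⟩ := bdd hreg (X := Set.range b)
    (by rintro x ⟨s, rfl⟩; exact hb1 s)
    ((Cardinal.mk_range_le).trans_lt hPcard)
  refine ⟨ε', hε', fun t ht hta => ?_⟩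
  obtain ⟨htu, htsig⟩ := ht
  obtain ⟨hta0, htaZ, htZsub, -, -, htultra, -⟩ := htu
  rcases htultra.2 (A ∩ t.Z) Set.inter_subset_right with h | h
  · exact h
  exfalso
  rw [Set.diff_inter_self_eq_diff] at h
  obtain ⟨s, hsp, hsF⟩ := htsig _ h
  have hsFil : IsFilterOn s.F s.Z := ((hp.1 hsp).2.2.2.2.2.1).1
  have hne : ((t.Z \ A) ∩ s.Z).Nonempty := by
    rcases Set.eq_empty_or_nonempty ((t.Z \ A) ∩ s.Z) with he | hne
    · exact absurd (he ▸ hsF) hsFil.2.2.2.2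
    · exact hne
  by_cases hsa : s.a < ε
  · obtain ⟨x, hx1, hx2⟩ := hne
    have hxb : x < b ⟨s, hsp, hsa⟩ := hb2 ⟨s, hsp, hsa⟩ x hx2
    have : b ⟨s, hsp, hsa⟩ < ε' := hYb _ ⟨_, rfl⟩
    have hxlt : x < ε' := hxb.trans this
    have : t.a ≤ x := (htZsub hx1.1).1
    exact absurd (hxlt.trans_le hta) (not_lt.mpr this)
  · have hAs : A ∩ s.Z ∈ s.F := hwit s hsp (not_lt.mp hsa)
    have hzero : (A ∩ s.Z) ∩ ((t.Z \ A) ∩ s.Z) ∈ s.F :=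
      hsFil.2.2.2.1 _ hAs _ hsF
    have : (A ∩ s.Z) ∩ ((t.Z \ A) ∩ s.Z) = ∅ := by
      ext x; simp only [Set.mem_inter_iff, Set.mem_diff, Set.mem_empty_iff_false, iff_false]
      tauto
    exact hsFil.2.2.2.2 (this ▸ hzero)

private lemma fin_inter {t : LocalFilter} (hfil : IsFilterOn t.F t.Z)
    (S : Set (Set Ordinal.{0})) (hfin : S.Finite) :
    (∀ A ∈ S, A ∩ t.Z ∈ t.F) → (⋂₀ S) ∩ t.Z ∈ t.F := by
  refine Set.Finite.induction_on (motive := fun S _ => (∀ A ∈ S, A ∩ t.Z ∈ t.F) → (⋂₀ S) ∩ t.Z ∈ t.F) S hfin ?_ ?_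
  · intro _
    simpa using hfil.2.1
  · intro A S' _ _ ih hmem
    have h1 : A ∩ t.Z ∈ t.F := hmem A (Set.mem_insert _ _)
    have h2 : (⋂₀ S') ∩ t.Z ∈ t.F := ih fun B hB => hmem B (Set.mem_insert_of_mem _ hB)
    have h3 : (A ∩ t.Z) ∩ ((⋂₀ S') ∩ t.Z) ∈ t.F := hfil.2.2.2.1 _ h1 _ h2
    have he : (⋂₀ insert A S') ∩ t.Z = (A ∩ t.Z) ∩ ((⋂₀ S') ∩ t.Z) := by
      rw [Set.sInter_insert]
      ext x
      simp only [Set.mem_inter_iff]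
      tauto
    rw [he]
    exact h3

private lemma upper_bound {lam : Cardinal.{0}} (hreg : lam.IsRegular) (hunc : ℵ₀ < lam)
    (H : Set (Set LocalFilter)) (hH : H ⊆ Qstar lam (Fult lam)) (hlin : Linked lam H)
    (S : Set (Set LocalFilter)) (hS : S ⊆ H) (hfin : S.Finite) (hne : S.Nonempty) :
    ∃ q ∈ Qstar lam (Fult lam), ∀ p ∈ S, fil lam p ⊆ fil lam q := by
  have hcard := hlin.2 S hS hfin hne
  set AS : Set Ordinal.{0} :=
    {α : Ordinal.{0} | ∃ t : LocalFilter, t.a = α ∧ ∀ p ∈ S, t ∈ SigmaP lam p} with hAS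
  have hch : ∀ α : ↥AS, ∃ t : LocalFilter, t.a = (α : Ordinal.{0}) ∧
      ∀ p ∈ S, t ∈ SigmaP lam p := fun α => α.2
  choose T hT1 hT2 using hch
  have hTinj : Function.Injective T := by
    intro α β hab
    apply Subtype.ext
    rw [← hT1 α, ← hT1 β, hab]
  obtain ⟨p₀, hp₀⟩ := hne
  refine ⟨Set.range T, ⟨?_, ?_, ?_⟩, ?_⟩
  · rintro t ⟨α, rfl⟩
    exact (hT2 α p₀ hp₀).1
  · rw [Cardinal.mk_range_eq T hTinj]
    exact hcard
  · intro ξ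
    have hss : {t : LocalFilter | t ∈ Set.range T ∧ t.a = ξ}.Subsingleton := by
      rintro t₁ ⟨⟨α, rfl⟩, h1⟩ t₂ ⟨⟨β, rfl⟩, h2⟩
      have : α = β := by
        apply Subtype.ext
        rw [← hT1 α, ← hT1 β, h1, h2]
      rw [this]
    calc #{t : LocalFilter | t ∈ Set.range T ∧ t.a = ξ} ≤ 1 :=
          hss.cardinalMk_le_one
      _ < Cardinal.lift.{1} lam := by
          calc (1 : Cardinal.{1}) < ℵ₀ := Cardinal.one_lt_aleph0
            _ ≤ Cardinal.lift.{1} lam := by simpa using Cardinal.lift_le.{1}.mpr hreg.1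
  · intro p hp A hA
    obtain ⟨ε', hε', hkey⟩ := sigma_fil hreg (hH (hS hp)) hA
    refine ⟨hA.1, ε', hε', ?_⟩
    rintro t ⟨α, rfl⟩ hta
    exact hkey _ (hT2 α p hp) hta

/-- Observation 2.8(1): a linked family has finite `≤*`-upper bounds and its
generated family has the finite intersection property. -/
theorem stmt15 (lam : Cardinal.{0}) (hreg : lam.IsRegular) (hunc : ℵ₀ < lam)
    (H : Set (Set LocalFilter)) (hH : H ⊆ Qstar lam (Fult lam))
    (hlin : Linked lam H) :
    (∀ S : Set (Set LocalFilter), S ⊆ H → S.Finite → S.Nonempty →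
      ∃ q ∈ Qstar lam (Fult lam), ∀ p ∈ S, fil lam p ⊆ fil lam q) ∧
    (∀ S : Set (Set Ordinal.{0}), S ⊆ filH lam H → S.Finite → S.Nonempty →
      (⋂₀ S).Nonempty) := by
  refine ⟨upper_bound hreg hunc H hH hlin, ?_⟩
  intro S hSsub hfin hne
  have hch : ∀ A : ↥S, ∃ r ∈ H, (A : Set Ordinal.{0}) ∈ fil lam r :=
    fun A => hSsub A.2
  choose r hrH hrA using hch
  have : Finite ↥S := hfin.to_subtype
  obtain ⟨A₀, hA₀⟩ := hne
  obtain ⟨q, hq, hfq⟩ := upper_bound hreg hunc H hH hlin (Set.range r)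
    (by rintro x ⟨A, rfl⟩; exact hrH A) (Set.finite_range r) ⟨r ⟨A₀, hA₀⟩, ⟨_, rfl⟩⟩
  have hAq : ∀ A : ↥S, (A : Set Ordinal.{0}) ∈ fil lam q :=
    fun A => hfq (r A) ⟨A, rfl⟩ (hrA A)
  choose hAsub ε hεlt hεwit using fun A : ↥S => hAq A
  obtain ⟨ε₀, hε₀, hεbd⟩ := bdd hreg (X := Set.range ε)
    (by rintro x ⟨A, rfl⟩; exact hεlt A)
    (Cardinal.mk_range_le.trans_lt
      (hfin.lt_aleph0.trans_le (by simpa using Cardinal.lift_le.{1}.mpr hreg.1)))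
  obtain ⟨t, htq, hta⟩ := exists_high hreg hq hε₀
  have htF : t ∈ Fult lam := hq.1 htq
  have htFil : IsFilterOn t.F t.Z := htF.2.2.2.2.2.1.1
  have hall : ∀ A ∈ S, A ∩ t.Z ∈ t.F := by
    intro A hA
    exact hεwit ⟨A, hA⟩ t htq ((hεbd _ ⟨⟨A, hA⟩, rfl⟩).le.trans hta)
  have hin : (⋂₀ S) ∩ t.Z ∈ t.F := fin_inter htFil S hfin hall
  rcases Set.eq_empty_or_nonempty ((⋂₀ S) ∩ t.Z) with he | hne'
  · exact absurd (he ▸ hin) htFil.2.2.2.2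
  · exact hne'.mono Set.inter_subset_left

end

end RS889
end

section
/- If H ⊆ Q*_λ is linked and big, then fil(H) is an ultrafilter on λ. -/
namespace RS889

noncomputable section

open Cardinal Set

universe u v

lemma liftRegular {lam : Cardinal.{0}} (hreg : lam.IsRegular) :
    (Cardinal.lift.{1} lam).IsRegular := by
  constructor
  · exact Cardinal.aleph0_le_lift.mpr hreg.1
  · rw [← Cardinal.lift_ord, ← Ordinal.lift_cof]
    exact Cardinal.lift_le.2 hreg.2

lemma bounded_of_small {lam : Cardinal.{0}} (hreg : lam.IsRegular) (hunc : ℵ₀ < lam)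
    {S : Set Ordinal.{0}} (hS : ∀ x ∈ S, x < lam.ord) (hc : #S < Cardinal.lift.{1} lam) :
    ∃ β < lam.ord, ∀ x ∈ S, x < β := by
  obtain ⟨μ, hμ⟩ := Cardinal.mem_range_lift_of_le hc.le
  have hμlt : μ < lam := by
    have := hμ ▸ hc
    exact Cardinal.lift_lt.1 this
  have hmk : #(ULift.{1} μ.out) = #S := by rw [Cardinal.mk_uLift, Cardinal.mk_out, hμ]
  obtain ⟨e⟩ := Cardinal.eq.mp hmk
  set f : μ.out → Ordinal.{0} := fun i => ((e (ULift.up i)) : Ordinal.{0}) with hf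
  have hsup : iSup f < lam.ord := by
    apply Ordinal.iSup_lt_ord
    · rw [Cardinal.mk_out, hreg.cof_eq]; exact hμlt
    · intro i; exact hS _ (e (ULift.up i)).2
  refine ⟨iSup f + 1, ?_, ?_⟩
  · rw [Ordinal.add_one_eq_succ]
    exact (Cardinal.isSuccLimit_ord hunc.le).succ_lt hsup
  · intro x hx
    have heq : f ((e.symm ⟨x, hx⟩).down) = x := by
      show ((e (ULift.up (e.symm ⟨x, hx⟩).down)) : Ordinal.{0}) = x
      rw [ULift.up_down, Equiv.apply_symm_apply]
    have hle : x ≤ iSup f := heq ▸ Ordinal.le_iSup f ((e.symm ⟨x, hx⟩).down)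
    have : iSup f < iSup f + 1 := by
      rw [Ordinal.add_one_eq_succ]; exact Order.lt_succ _
    exact hle.trans_lt this

lemma small_levels {lam : Cardinal.{0}} (hreg : lam.IsRegular) {r : Set LocalFilter}
    (hlev : ∀ ξ : Ordinal.{0}, #{t | t ∈ r ∧ t.a = ξ} < Cardinal.lift.{1} lam)
    {ε : Ordinal.{0}} (hε : ε < lam.ord) :
    #{t | t ∈ r ∧ t.a < ε} < Cardinal.lift.{1} lam := by
  have hsub : {t | t ∈ r ∧ t.a < ε} ⊆
      ⋃ (ξ : Set.Iio ε), {t : LocalFilter | t ∈ r ∧ t.a = (ξ : Ordinal.{0})} := by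
    rintro t ⟨ht, hta⟩
    exact Set.mem_iUnion.2 ⟨⟨t.a, hta⟩, ht, rfl⟩
  apply lt_of_le_of_lt (Cardinal.mk_le_mk_of_subset hsub)
  apply lt_of_le_of_lt (Cardinal.mk_iUnion_le _)
  have hι : #(Set.Iio ε) < Cardinal.lift.{1} lam := by
    rw [Ordinal.mk_Iio_ordinal]
    exact Cardinal.lift_lt.2 (Cardinal.lt_ord.1 hε)
  exact Cardinal.mul_lt_of_lt (Cardinal.aleph0_le_lift.mpr hreg.1) hι
    (Cardinal.iSup_lt_of_isRegular (liftRegular hreg) hι fun ξ => hlev ξ)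

lemma exists_ge {lam : Cardinal.{0}} (hreg : lam.IsRegular) {r : Set LocalFilter}
    (hr : #r = Cardinal.lift.{1} lam)
    (hlev : ∀ ξ : Ordinal.{0}, #{t | t ∈ r ∧ t.a = ξ} < Cardinal.lift.{1} lam)
    {ε : Ordinal.{0}} (hε : ε < lam.ord) :
    ∃ t ∈ r, ε ≤ t.a := by
  by_contra h
  push_neg at h
  have hsub : r ⊆ {t | t ∈ r ∧ t.a < ε} := fun t ht => ⟨ht, h t ht⟩
  have := (Cardinal.mk_le_mk_of_subset hsub).trans_lt (small_levels hreg hlev hε)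
  rw [hr] at this
  exact lt_irrefl _ this

lemma unbounded_of_mk {lam : Cardinal.{0}} {S : Set Ordinal.{0}}
    (hc : Cardinal.lift.{1} lam ≤ #S) {β : Ordinal.{0}} (hβ : β < lam.ord) :
    ∃ α ∈ S, β ≤ α := by
  by_contra h
  push_neg at h
  have hsub : S ⊆ Set.Iio β := fun x hx => h x hx
  have h2 := hc.trans (Cardinal.mk_le_mk_of_subset hsub)
  rw [Ordinal.mk_Iio_ordinal] at h2
  exact absurd (Cardinal.lift_le.1 h2) (not_le.2 (Cardinal.lt_ord.1 hβ))


lemma fult_filterOn {lam : Cardinal.{0}} {t : LocalFilter} (ht : t ∈ Fult lam) :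
    IsFilterOn t.F t.Z := ht.2.2.2.2.2.1.1

lemma fult_ultra {lam : Cardinal.{0}} {t : LocalFilter} (ht : t ∈ Fult lam) :
    IsUltraOn t.F t.Z := ht.2.2.2.2.2.1

lemma fult_subIio {lam : Cardinal.{0}} {t : LocalFilter} (ht : t ∈ Fult lam) :
    t.Z ⊆ Set.Iio lam.ord := fun _ hx => (ht.2.2.1 hx).2

lemma fult_ge {lam : Cardinal.{0}} {t : LocalFilter} (ht : t ∈ Fult lam) :
    ∀ x ∈ t.Z, t.a ≤ x := fun _ hx => (ht.2.2.1 hx).1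

/-- If `W` is strongly in `q` and `X ∈ t.F` for some `t ∈ Σ(q)` with `X ∩ W = ∅`, contradiction. -/
lemma neg_lemma {lam : Cardinal.{0}} {q : Set LocalFilter} (hq : q ⊆ Fult lam)
    {W : Set Ordinal.{0}} (hst : ∀ s ∈ q, W ∩ s.Z ∈ s.F) {t : LocalFilter}
    (ht : t ∈ SigmaP lam q) {X : Set Ordinal.{0}} (hX : X ∈ t.F) (hXW : X ∩ W = ∅) :
    False := by
  obtain ⟨s, hs, hsX⟩ := ht.2 X hX
  have hsF := fult_filterOn (hq hs)
  have hmem := hsF.2.2.2.1 _ hsX _ (hst s hs)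
  have hempty : (X ∩ s.Z) ∩ (W ∩ s.Z) = ∅ := by
    rw [Set.eq_empty_iff_forall_notMem]
    rintro x ⟨⟨hx1, -⟩, ⟨hx2, -⟩⟩
    exact (Set.eq_empty_iff_forall_notMem.1 hXW) x ⟨hx1, hx2⟩
  exact hsF.2.2.2.2 (hempty ▸ hmem)

lemma sigma_strong {lam : Cardinal.{0}} {q : Set LocalFilter} (hq : q ⊆ Fult lam)
    {A : Set Ordinal.{0}} (hst : ∀ s ∈ q, A ∩ s.Z ∈ s.F) {t : LocalFilter}
    (ht : t ∈ SigmaP lam q) : A ∩ t.Z ∈ t.F := by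
  rcases (fult_ultra ht.1).2 (A ∩ t.Z) Set.inter_subset_right with h | h
  · exact h
  · exfalso
    apply neg_lemma hq hst ht h
    rw [Set.eq_empty_iff_forall_notMem]
    rintro x ⟨⟨hxZ, hxn⟩, hxA⟩
    exact hxn ⟨hxA, hxZ⟩

lemma dicho {lam : Cardinal.{0}} {H : Set (Set LocalFilter)}
    (hH : H ⊆ Qstar lam (Fult lam)) (hbig : Big lam H) (A : Set Ordinal.{0}) :
    ∃ q ∈ H, (∀ s ∈ q, A ∩ s.Z ∈ s.F) ∨
      (∀ s ∈ q, ((Set.Iio lam.ord) \ A) ∩ s.Z ∈ s.F) := by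
  obtain ⟨q, hq, hcase⟩ := hbig.2 {t | t ∈ Fult lam ∧ A ∩ t.Z ∈ t.F} (fun t ht => ht.1)
  refine ⟨q, hq, ?_⟩
  rcases hcase with h | h
  · exact Or.inl fun s hs => (h hs).2
  · right
    intro s hs
    have hsF : s ∈ Fult lam := (hH hq).1 hs
    have hnot : A ∩ s.Z ∉ s.F := fun hmem =>
      (Set.eq_empty_iff_forall_notMem.1 h) s ⟨hs, hsF, hmem⟩
    rcases (fult_ultra hsF).2 (A ∩ s.Z) Set.inter_subset_right with h1 | h1
    · exact absurd h1 hnot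
    · have heq : ((Set.Iio lam.ord) \ A) ∩ s.Z = s.Z \ (A ∩ s.Z) := by
        ext x
        constructor
        · rintro ⟨⟨-, hxA⟩, hxZ⟩
          exact ⟨hxZ, fun hx => hxA hx.1⟩
        · rintro ⟨hxZ, hxn⟩
          exact ⟨⟨fult_subIio hsF hxZ, fun hxA => hxn ⟨hxA, hxZ⟩⟩, hxZ⟩
      rwa [heq]

/-- The crucial contradiction: `A ∈ fil(p)` and `∁A` strongly in `q` is impossible. -/
lemma contra {lam : Cardinal.{0}} (hreg : lam.IsRegular) (hunc : ℵ₀ < lam)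
    {H : Set (Set LocalFilter)} (hH : H ⊆ Qstar lam (Fult lam)) (hlin : Linked lam H)
    {p q : Set LocalFilter} (hp : p ∈ H) (hq : q ∈ H) {A : Set Ordinal.{0}}
    (hA : A ∈ fil lam p) (hst : ∀ s ∈ q, ((Set.Iio lam.ord) \ A) ∩ s.Z ∈ s.F) :
    False := by
  obtain ⟨hAsub, ε, hε, hfil⟩ := hA
  have hpQ := hH hp
  have hbadcard : #{s | s ∈ p ∧ s.a < ε} < Cardinal.lift.{1} lam :=
    small_levels hreg hpQ.2.2 hε
  have hZcard : ∀ s : {s | s ∈ p ∧ s.a < ε}, #(s : LocalFilter).Z < Cardinal.lift.{1} lam :=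
    fun s => (hpQ.1 s.2.1).2.2.2.2.1
  have hUcard : #(⋃ s ∈ {s | s ∈ p ∧ s.a < ε}, s.Z) < Cardinal.lift.{1} lam := by
    apply lt_of_le_of_lt (Cardinal.mk_biUnion_le _ _)
    exact Cardinal.mul_lt_of_lt (Cardinal.aleph0_le_lift.mpr hreg.1) hbadcard
      (Cardinal.iSup_lt_of_isRegular (liftRegular hreg) hbadcard hZcard)
  have hUsub : ∀ x ∈ ⋃ s ∈ {s | s ∈ p ∧ s.a < ε}, s.Z, x < lam.ord := by
    intro x hx
    rw [Set.mem_iUnion₂] at hx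
    obtain ⟨s, hs, hxs⟩ := hx
    exact fult_subIio (hpQ.1 hs.1) hxs
  obtain ⟨β, hβ, hβbd⟩ := bounded_of_small hreg hunc hUsub hUcard
  have hS : ({p, q} : Set (Set LocalFilter)) ⊆ H := by
    rintro x (rfl | rfl) <;> assumption
  have hT := (hlin.2 {p, q} hS (Set.toFinite _) ⟨p, Set.mem_insert _ _⟩).ge
  have hmax : max β ε < lam.ord := max_lt hβ hε
  obtain ⟨α, hαT, hαge⟩ := unbounded_of_mk hT hmax
  obtain ⟨t, hta, hall⟩ := hαT
  have htp : t ∈ SigmaP lam p := hall p (Set.mem_insert _ _)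
  have htq : t ∈ SigmaP lam q := hall q (Set.mem_insert_iff.2 (Or.inr rfl))
  have htF : t ∈ Fult lam := htp.1
  rcases (fult_ultra htF).2 (A ∩ t.Z) Set.inter_subset_right with h1 | h1
  · apply neg_lemma (hH hq).1 hst htq h1
    rw [Set.eq_empty_iff_forall_notMem]
    rintro x ⟨⟨hxA, -⟩, ⟨-, hxA'⟩⟩
    exact hxA' hxA
  · obtain ⟨s, hs, hsX⟩ := htp.2 _ h1
    have hsF : s ∈ Fult lam := hpQ.1 hs
    have hne : ((t.Z \ (A ∩ t.Z)) ∩ s.Z).Nonempty := by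
      rcases Set.eq_empty_or_nonempty ((t.Z \ (A ∩ t.Z)) ∩ s.Z) with he | hne
      · exact absurd (he ▸ hsX) (fult_filterOn hsF).2.2.2.2
      · exact hne
    obtain ⟨x, hx⟩ := hne
    have hxa : max β ε ≤ x := hαge.trans (hta ▸ fult_ge htF x hx.1.1)
    have hsa : ε ≤ s.a := by
      by_contra hlt
      have hxU : x ∈ ⋃ s ∈ {s | s ∈ p ∧ s.a < ε}, s.Z :=
        Set.mem_biUnion ⟨hs, not_le.1 hlt⟩ hx.2
      exact absurd (hβbd x hxU) (not_lt.2 ((le_max_left β ε).trans hxa))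
    have hmem := (fult_filterOn hsF).2.2.2.1 _ hsX _ (hfil s hs hsa)
    have hempty : ((t.Z \ (A ∩ t.Z)) ∩ s.Z) ∩ (A ∩ s.Z) = ∅ := by
      rw [Set.eq_empty_iff_forall_notMem]
      rintro y ⟨⟨⟨hyZ, hyn⟩, -⟩, ⟨hyA, -⟩⟩
      exact hyn ⟨hyA, hyZ⟩
    exact (fult_filterOn hsF).2.2.2.2 (hempty ▸ hmem)

lemma triple {lam : Cardinal.{0}} (hreg : lam.IsRegular) {H : Set (Set LocalFilter)}
    (hH : H ⊆ Qstar lam (Fult lam)) (hlin : Linked lam H)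
    {q₀ q₁ q₂ : Set LocalFilter} (h0 : q₀ ∈ H) (h1 : q₁ ∈ H) (h2 : q₂ ∈ H)
    {A B : Set Ordinal.{0}} (hsA : ∀ s ∈ q₀, A ∩ s.Z ∈ s.F)
    (hsB : ∀ s ∈ q₁, B ∩ s.Z ∈ s.F)
    (hsC : ∀ s ∈ q₂, ((Set.Iio lam.ord) \ (A ∩ B)) ∩ s.Z ∈ s.F) : False := by
  have hS : ({q₀, q₁, q₂} : Set (Set LocalFilter)) ⊆ H := by
    rintro x (rfl | rfl | rfl) <;> assumption
  have hT := hlin.2 {q₀, q₁, q₂} hS (Set.toFinite _) ⟨q₀, Set.mem_insert _ _⟩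
  have hne : {α : Ordinal.{0} | ∃ t : LocalFilter, t.a = α ∧
      ∀ p ∈ ({q₀, q₁, q₂} : Set (Set LocalFilter)), t ∈ SigmaP lam p}.Nonempty := by
    rw [← Set.nonempty_coe_sort, ← Cardinal.mk_ne_zero_iff, hT]
    simp only [ne_eq, Cardinal.lift_eq_zero]
    exact hreg.pos.ne'
  obtain ⟨α, t, hta, hall⟩ := hne
  have ht0 : t ∈ SigmaP lam q₀ := hall q₀ (by simp)
  have ht1 : t ∈ SigmaP lam q₁ := hall q₁ (by simp)
  have ht2 : t ∈ SigmaP lam q₂ := hall q₂ (by simp)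
  have hA : A ∩ t.Z ∈ t.F := sigma_strong (hH h0).1 hsA ht0
  have hB : B ∩ t.Z ∈ t.F := sigma_strong (hH h1).1 hsB ht1
  have hAB := (fult_filterOn ht0.1).2.2.2.1 _ hA _ hB
  apply neg_lemma (hH h2).1 hsC ht2 hAB
  rw [Set.eq_empty_iff_forall_notMem]
  rintro x ⟨⟨⟨hxA, -⟩, ⟨hxB, -⟩⟩, ⟨-, hxn⟩⟩
  exact hxn ⟨hxA, hxB⟩

/-- Observation 2.8(2): if `H` is linked and big then `fil(H)` is an ultrafilter. -/
theorem stmt16 (lam : Cardinal.{0}) (hreg : lam.IsRegular) (hunc : ℵ₀ < lam)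
    (H : Set (Set LocalFilter)) (hH : H ⊆ Qstar lam (Fult lam))
    (hlin : Linked lam H) (hbig : Big lam H) :
    IsUltraOn (filH lam H) (Set.Iio lam.ord) := by
  have hQ : ∀ q ∈ H, q ⊆ Fult lam := fun q hq => (hH hq).1
  have hstrong_mem : ∀ (A : Set Ordinal.{0}) (q : Set LocalFilter), q ∈ H →
      A ⊆ Set.Iio lam.ord → (∀ s ∈ q, A ∩ s.Z ∈ s.F) → A ∈ filH lam H := by
    intro A q hq hsub hst
    exact ⟨q, hq, hsub, 0, hreg.ord_pos, fun t ht _ => hst t ht⟩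
  have hget : ∀ A : Set Ordinal.{0}, A ∈ filH lam H →
      ∃ q ∈ H, ∀ s ∈ q, A ∩ s.Z ∈ s.F := by
    intro A hA
    obtain ⟨p, hp, hAfil⟩ := hA
    obtain ⟨q, hq, hcase⟩ := dicho hH hbig A
    rcases hcase with h | h
    · exact ⟨q, hq, h⟩
    · exact (contra hreg hunc hH hlin hp hq hAfil h).elim
  constructor
  · refine ⟨?_, ?_, ?_, ?_, ?_⟩
    · rintro A ⟨r, hr, hsub, -⟩
      exact hsub
    · obtain ⟨r, hr⟩ := hbig.1
      refine ⟨r, hr, subset_rfl, 0, hreg.ord_pos, fun t ht _ => ?_⟩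
      rw [Set.inter_eq_self_of_subset_right (fult_subIio (hQ r hr ht))]
      exact (fult_filterOn (hQ r hr ht)).2.1
    · rintro A ⟨r, hr, hsub, ε, hε, hfil⟩ B hAB hBsub
      refine ⟨r, hr, hBsub, ε, hε, fun t ht hta => ?_⟩
      exact (fult_filterOn (hQ r hr ht)).2.2.1 _ (hfil t ht hta) _
        (Set.inter_subset_inter_left _ hAB) Set.inter_subset_right
    · intro A hA B hB
      have hA' := hA
      obtain ⟨pA, -, hsubA, -⟩ := hA'
      obtain ⟨qA, hqA, hstA⟩ := hget A hA
      obtain ⟨qB, hqB, hstB⟩ := hget B hB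
      obtain ⟨q₂, hq₂, hcase⟩ := dicho hH hbig (A ∩ B)
      rcases hcase with h | h
      · exact hstrong_mem _ q₂ hq₂ (Set.inter_subset_left.trans hsubA) h
      · exact (triple hreg hH hlin hqA hqB hq₂ hstA hstB h).elim
    · rintro ⟨r, hr, -, ε, hε, hfil⟩
      obtain ⟨t, ht, hta⟩ := exists_ge hreg (hH hr).2.1 (hH hr).2.2 hε
      have hmem := hfil t ht hta
      rw [Set.empty_inter] at hmem
      exact (fult_filterOn (hQ r hr ht)).2.2.2.2 hmem
  · intro A hAsub
    obtain ⟨q, hq, hcase⟩ := dicho hH hbig A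
    rcases hcase with h | h
    · exact Or.inl (hstrong_mem A q hq hAsub h)
    · exact Or.inr (hstrong_mem _ q hq Set.diff_subset h)


end

end RS889
end
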